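/- The Shapley index satisfies reasonable lower bound: for every streaming problem (N, M, t) and every set of users C ⊆ M, writing L^C = ⋃_{j∈C} L^j, it holds that Σ_{i∈L^C} Sh_i(N, M, t) ≥ |C|. -/

import Mathlib

open Finset

/-- A streaming problem: a finite nonempty set `N` of artists, a finite nonempty set
`M` of users, and a streams matrix `t` such that every user streamed some content. -/
structure StreamingProblem where
  N : Finset ℕ
  M : Finset ℕ
  t : ℕ → ℕ → ℕ
  N_nonempty : N.Nonempty
  M_nonempty : M.Nonempty
  streams_pos : ∀ j ∈ M, 0 < ∑ i ∈ N, t i j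

namespace StreamingProblem

/-- `L^j` : the set of artists streamed by user `j`. -/
def Lset (P : StreamingProblem) (j : ℕ) : Finset ℕ :=
  P.N.filter fun i => 0 < P.t i j

/-- `F_i` : the set of fans of artist `i`. -/
def Fset (P : StreamingProblem) (i : ℕ) : Finset ℕ :=
  P.M.filter fun j => 0 < P.t i j

/-- The Shapley index: `Sh_i(N,M,t) = ∑_{j ∈ M : t_{ij} > 0} 1 / |L^j|`. -/
noncomputable def Sh (P : StreamingProblem) (i : ℕ) : ℝ :=
  ∑ j ∈ P.M.filter (fun j => 0 < P.t i j), (1 : ℝ) / ((P.Lset j).card : ℝ)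

end StreamingProblem

open StreamingProblem

/-- The Shapley index satisfies the reasonable lower bound: for every set of users
`C ⊆ M`, the artists in `L^C = ⋃_{j ∈ C} L^j` jointly receive at least `|C|`. -/
theorem shapley_reasonable_lower_bound (P : StreamingProblem) (C : Finset ℕ) (hC : C ⊆ P.M) :
    (C.card : ℝ) ≤ ∑ i ∈ P.N.filter (fun i => ∃ j ∈ C, 0 < P.t i j), P.Sh i := by
  classical
  set S := P.N.filter (fun i => ∃ j ∈ C, 0 < P.t i j) with hS
  have hLsub : ∀ j ∈ C, P.Lset j = S.filter (fun i => 0 < P.t i j) := by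
    intro j hj
    ext i
    simp only [Lset, hS, Finset.mem_filter]
    constructor
    · rintro ⟨hiN, hti⟩; exact ⟨⟨hiN, ⟨j, hj, hti⟩⟩, hti⟩
    · rintro ⟨⟨hiN, _⟩, hti⟩; exact ⟨hiN, hti⟩
  have hne : ∀ j ∈ C, (P.Lset j).card ≠ 0 := by
    intro j hj
    have hpos := P.streams_pos j (hC hj)
    have hex : ∃ i ∈ P.N, 0 < P.t i j := by
      by_contra h
      push_neg at h
      have : ∑ i ∈ P.N, P.t i j = 0 :=
        Finset.sum_eq_zero fun i hi => Nat.le_zero.mp (h i hi)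
      omega
    obtain ⟨i, hiN, hti⟩ := hex
    exact Finset.card_ne_zero_of_mem (Finset.mem_filter.mpr ⟨hiN, hti⟩)
  have step1 : (C.card : ℝ) =
      ∑ j ∈ C, ∑ i ∈ S.filter (fun i => 0 < P.t i j), (1:ℝ)/((P.Lset j).card : ℝ) := by
    rw [Finset.card_eq_sum_ones C, Nat.cast_sum]
    refine Finset.sum_congr rfl fun j hj => ?_
    rw [← hLsub j hj, Finset.sum_const, nsmul_eq_mul, mul_one_div, div_self
      (Nat.cast_ne_zero.mpr (hne j hj))]
    simp
  rw [step1]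
  simp_rw [Finset.sum_filter]
  rw [Finset.sum_comm]
  refine Finset.sum_le_sum fun i hi => ?_
  rw [← Finset.sum_filter]
  unfold Sh
  refine Finset.sum_le_sum_of_subset_of_nonneg (Finset.filter_subset_filter _ hC) ?_
  intro j _ _
  positivity
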